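/- Let N ≥ 1 and k ≥ 2 be integers with N ≥ 2(k-1), set d = N + k, and let i = (i_0,...,i_N), j = (j_0,...,j_N) be tuples of positive integers each summing to d with i ≠ j. Then for every m ≥ 1, the coefficient of the monomial x_0^{m j_0 - i_0} ⋯ x_N^{m j_N - i_N} in (x_0^d + x_1^d + ⋯ + x_N^d)^{m-1} (over ℤ) is zero. -/

import Mathlib

open MvPolynomial in
lemma aux_coeff {σ : Type*} [Fintype σ] [DecidableEq σ] (d : ℕ) :
    ∀ (p : ℕ) (μ : σ →₀ ℕ),
      MvPolynomial.coeff μ ((∑ n : σ, (X n : MvPolynomial σ ℤ) ^ d) ^ p) ≠ 0 →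
      (∀ n, d ∣ μ n) ∧ (∑ n, μ n = d * p) := by
  intro p
  induction p with
  | zero =>
    intro μ h
    rw [pow_zero, MvPolynomial.coeff_one] at h
    have hμ : μ = 0 := by
      by_contra hne
      simp [Ne.symm hne] at h
    subst hμ
    simp
  | succ p ih =>
    intro μ h
    rw [pow_succ, MvPolynomial.coeff_mul] at h
    obtain ⟨⟨a, b⟩, hab, hne⟩ := Finset.exists_ne_zero_of_sum_ne_zero h
    rw [Finset.HasAntidiagonal.mem_antidiagonal] at hab
    have ha : MvPolynomial.coeff a ((∑ n : σ, (X n : MvPolynomial σ ℤ) ^ d) ^ p) ≠ 0 :=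
      fun h0 => hne (by simp [h0])
    have hb : MvPolynomial.coeff b (∑ n : σ, (X n : MvPolynomial σ ℤ) ^ d) ≠ 0 :=
      fun h0 => hne (by simp [h0])
    rw [MvPolynomial.coeff_sum] at hb
    obtain ⟨n0, _, hn0⟩ := Finset.exists_ne_zero_of_sum_ne_zero hb
    rw [MvPolynomial.coeff_X_pow] at hn0
    have hbn : b = Finsupp.single n0 d := by
      by_contra hne'
      simp [Ne.symm hne'] at hn0
    obtain ⟨hdvd, hsum⟩ := ih a ha
    subst hbn
    constructor
    · intro n
      have : μ n = a n + (Finsupp.single n0 d) n := by rw [← hab]; simp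
      rw [this]
      rcases eq_or_ne n n0 with rfl | hnn
      · simpa using Dvd.dvd.add (hdvd n) dvd_rfl
      · have : (Finsupp.single n0 d) n = 0 := by
          simp [Finsupp.single_apply, Ne.symm hnn]
        rw [this, add_zero]; exact hdvd n
    · have : ∑ n, μ n = ∑ n, (a n + (Finsupp.single n0 d) n) := by
        rw [← hab]; simp
      rw [this, Finset.sum_add_distrib, hsum]
      have : ∑ n, (Finsupp.single n0 d) n = d := by
        simp [Finsupp.single_apply]
      rw [this]; ring

open MvPolynomial in
theorem stmt4 (N k d : ℕ) (hN : 1 ≤ N) (hk : 2 ≤ k) (hNk : 2 * (k - 1) ≤ N)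
    (hd : d = N + k) (i j : Fin (N + 1) → ℕ)
    (hi : ∀ n, 1 ≤ i n) (hj : ∀ n, 1 ≤ j n)
    (hsi : ∑ n, i n = d) (hsj : ∑ n, j n = d) (hij : i ≠ j)
    (m : ℕ) (hm : 1 ≤ m) :
    MvPolynomial.coeff (Finsupp.equivFunOnFinite.symm (fun n => m * j n - i n))
      ((∑ n : Fin (N + 1), (X n : MvPolynomial (Fin (N + 1)) ℤ) ^ d) ^ (m - 1)) = 0 := by
  by_contra h
  obtain ⟨hdvd, hsum⟩ := aux_coeff d (m - 1) _ h
  have hμ : ∀ n, (Finsupp.equivFunOnFinite.symm (fun n => m * j n - i n)) n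
      = m * j n - i n := fun n => rfl
  simp only [hμ] at hdvd hsum
  -- each i n ≤ m * j n
  have hle : ∀ n, i n ≤ m * j n := by
    have key : ∑ n, (((m * j n - i n : ℕ) : ℤ) - ((m : ℤ) * j n - i n)) = 0 := by
      have e1 : ∑ n, ((m * j n - i n : ℕ) : ℤ) = (d : ℤ) * ((m : ℤ) - 1) := by
        rw [← Nat.cast_sum, hsum]
        push_cast [Nat.cast_sub hm]
        ring
      have e2 : ∑ n, ((m : ℤ) * (j n : ℤ) - (i n : ℤ)) = (m : ℤ) * d - d := by
        rw [Finset.sum_sub_distrib, ← Finset.mul_sum, ← Nat.cast_sum, ← Nat.cast_sum, hsi, hsj]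
      rw [Finset.sum_sub_distrib, e1, e2]
      ring
    have hnn : ∀ n ∈ Finset.univ, (0:ℤ) ≤ ((m * j n - i n : ℕ) : ℤ) - ((m : ℤ) * j n - i n) := by
      intro n _
      have : (m : ℤ) * j n - i n ≤ ((m * j n - i n : ℕ) : ℤ) := by
        have h1 : (m * j n : ℕ) ≤ (m * j n - i n) + i n := le_tsub_add
        have h2 : ((m * j n : ℕ) : ℤ) ≤ (((m * j n - i n) + i n : ℕ) : ℤ) := Nat.cast_le.mpr h1
        push_cast at h2
        rename_i this'
        have := h2
        linarith
      linarith
    have := (Finset.sum_eq_zero_iff_of_nonneg hnn).mp key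
    intro n
    have h0 := this n (Finset.mem_univ n)
    have h2 : (m : ℤ) * j n - i n = ((m * j n - i n : ℕ) : ℤ) := by linarith
    have h3 : (0:ℤ) ≤ (m : ℤ) * j n - i n := h2 ▸ Int.natCast_nonneg _
    have : (i n : ℤ) ≤ (m : ℤ) * j n := by linarith
    exact_mod_cast this
  -- divisibility over ℤ
  have hdvdZ : ∀ n, (d : ℤ) ∣ (m : ℤ) * j n - i n := by
    intro n
    have := hdvd n
    have h1 : ((m * j n - i n : ℕ) : ℤ) = (m : ℤ) * j n - i n := by
      push_cast [Nat.cast_sub (hle n)]; ring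
    exact_mod_cast h1 ▸ (Int.natCast_dvd_natCast.mpr this)
  -- bounds i n ≤ k, j n ≤ k
  have hbound : ∀ (f : Fin (N+1) → ℕ), (∀ n, 1 ≤ f n) → (∑ n, f n = d) → ∀ n, f n ≤ k := by
    intro f hf hsf n
    have h1 : f n + ∑ n' ∈ Finset.univ.erase n, f n' = d := by
      rw [← hsf, Finset.add_sum_erase _ _ (Finset.mem_univ n)]
    have h2 : (Finset.univ.erase n).card ≤ ∑ n' ∈ Finset.univ.erase n, f n' :=
      Finset.card_nsmul_le_sum _ _ 1 (fun x _ => hf x) |>.trans_eq' (by simp)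
    have h3 : (Finset.univ.erase n).card = N := by
      rw [Finset.card_erase_of_mem (Finset.mem_univ n)]; simp
    omega
  -- pigeonhole: find s with i s = 1 = j s
  have hcard : ∀ (f : Fin (N+1) → ℕ), (∀ n, 1 ≤ f n) → (∑ n, f n = d) →
      (Finset.univ.filter (fun n => 2 ≤ f n)).card ≤ k - 1 := by
    intro f hf hsf
    have h1 : ∑ n, (f n - 1) + (N + 1) = d := by
      have : ∑ n, (f n - 1) + (N+1) = ∑ n, ((f n - 1) + 1) := by
        rw [Finset.sum_add_distrib]; simp
      rw [this, ← hsf]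
      exact Finset.sum_congr rfl (fun n _ => by have := hf n; omega)
    have h2 : (Finset.univ.filter (fun n => 2 ≤ f n)).card
        ≤ ∑ n ∈ Finset.univ.filter (fun n => 2 ≤ f n), (f n - 1) := by
      refine Finset.card_nsmul_le_sum _ _ 1 (fun x hx => ?_) |>.trans_eq' (by simp)
      have := (Finset.mem_filter.mp hx).2; omega
    have h3 : ∑ n ∈ Finset.univ.filter (fun n => 2 ≤ f n), (f n - 1) ≤ ∑ n, (f n - 1) :=
      Finset.sum_le_sum_of_subset (Finset.filter_subset _ _)
    omega
  obtain ⟨s, hs⟩ : ∃ s : Fin (N+1), s ∉ (Finset.univ.filter (fun n => 2 ≤ i n))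
      ∪ (Finset.univ.filter (fun n => 2 ≤ j n)) := by
    by_contra hc
    push_neg at hc
    have h1 : (Finset.univ : Finset (Fin (N+1))).card
        ≤ ((Finset.univ.filter (fun n => 2 ≤ i n)) ∪ (Finset.univ.filter (fun n => 2 ≤ j n))).card :=
      Finset.card_le_card (fun x _ => hc x)
    have h2 := Finset.card_union_le (Finset.univ.filter (fun n => 2 ≤ i n))
      (Finset.univ.filter (fun n => 2 ≤ j n))
    have h3 := hcard i hi hsi
    have h4 := hcard j hj hsj
    simp at h1
    omega
  simp only [Finset.mem_union, Finset.mem_filter, Finset.mem_univ, true_and, not_or, not_le] at hs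
  have his : i s = 1 := by have := hi s; omega
  have hjs : j s = 1 := by have := hj s; omega
  have hm1 : (d : ℤ) ∣ (m : ℤ) - 1 := by
    have h0 := hdvdZ s
    rw [his, hjs] at h0
    simpa using h0
  have heq : ∀ n, i n = j n := by
    intro n
    have h1 : (d : ℤ) ∣ ((j n : ℤ) - i n) := by
      have h2 := hdvdZ n
      have h3 : (d:ℤ) ∣ ((m:ℤ) - 1) * j n := hm1.mul_right _
      have h4 : (j n : ℤ) - i n = ((m : ℤ) * j n - i n) - ((m:ℤ) - 1) * j n := by ring
      rw [h4]; exact dvd_sub h2 h3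
    have hik := hbound i hi hsi n
    have hjk := hbound j hj hsj n
    have habs : |(j n : ℤ) - i n| < d := by
      rw [abs_lt]
      have := hi n; have := hj n
      constructor <;> omega
    have := Int.eq_zero_of_abs_lt_dvd h1 habs
    omega
  exact hij (funext heq)
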